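/- Let G = (V, E) be a finite simple undirected graph and let x be a feasible solution of the pairwise formulation. Then there exists a proper coloring of G using exactly k colors, where k is the number of connected components of the graph (V, E_x) with E_x = {{u, v} : x_{uv} = 1}. Consequently, χ(G) ≤ ∑_{v ∈ V} f_v(x). -/

import Mathlib

open Finset

/-- From a feasible solution `x` of the pairwise formulation one obtains a proper coloring
of `G` using exactly `k` colors, where `k` is the number of connected components of
`(V, E_x)`; consequently `χ(G) ≤ ∑_v f_v(x)`. -/
theorem feasible_solution_gives_coloring
    {V : Type*} [Fintype V] [DecidableEq V] (G : SimpleGraph V)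
    (x : V → V → ℝ)
    (hsymm : ∀ u v : V, x u v = x v u)
    (hbin : ∀ u v : V, u ≠ v → x u v = 0 ∨ x u v = 1)
    (hedge : ∀ u v : V, G.Adj u v → x u v = 0)
    (htri : ∀ u v w : V, u ≠ v → v ≠ w → u ≠ w → x u v + x v w - x u w ≤ 1)
    (k : ℕ)
    (hk : Nat.card (SimpleGraph.fromRel fun a b => x a b = 1).ConnectedComponent = k) :
    (∃ c : V → Fin k, (∀ u v : V, G.Adj u v → c u ≠ c v) ∧ Function.Surjective c) ∧
    (G.chromaticNumber.toNat : ℝ) ≤ ∑ v : V, 1 / (1 + ∑ u ∈ univ.filter (· ≠ v), x u v) := by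
  classical
  set H := SimpleGraph.fromRel fun a b => x a b = 1 with hH
  -- transitivity of the relation `a = b ∨ x a b = 1`
  have Strans : ∀ a b c : V, (a = b ∨ x a b = 1) → (b = c ∨ x b c = 1) →
      (a = c ∨ x a c = 1) := by
    intro a b c hab hbc
    rcases hab with rfl | hab
    · exact hbc
    rcases hbc with rfl | hbc
    · exact Or.inr hab
    by_cases h1 : a = b
    · subst h1; exact Or.inr hbc
    by_cases h2 : b = c
    · subst h2; exact Or.inr hab
    by_cases hac : a = c
    · exact Or.inl hac
    right
    have ht := htri a b c h1 h2 hac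
    rcases hbin a c hac with h | h
    · exfalso; rw [hab, hbc, h] at ht; linarith
    · exact h
  have reach_iff : ∀ a b : V, H.Reachable a b ↔ (a = b ∨ x a b = 1) := by
    intro a b
    constructor
    · intro h
      rw [SimpleGraph.reachable_iff_reflTransGen] at h
      induction h with
      | refl => exact Or.inl rfl
      | @tail c d hrtg hadj ih =>
        have hcd : c = d ∨ x c d = 1 := by
          rw [hH, SimpleGraph.fromRel_adj] at hadj
          rcases hadj with ⟨hne, h' | h'⟩
          · exact Or.inr h'
          · exact Or.inr (by rw [hsymm]; exact h')
        exact Strans _ _ _ ih hcd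
    · intro h
      rcases h with rfl | h
      · exact SimpleGraph.Reachable.refl a
      by_cases hab : a = b
      · subst hab; exact SimpleGraph.Reachable.refl a
      · exact SimpleGraph.Adj.reachable
          ((SimpleGraph.fromRel_adj _ a b).mpr ⟨hab, Or.inl h⟩)
  have comp_eq : ∀ a b : V,
      H.connectedComponentMk a = H.connectedComponentMk b ↔ (a = b ∨ x a b = 1) := by
    intro a b
    rw [SimpleGraph.ConnectedComponent.eq]
    exact reach_iff a b
  letI : Fintype H.ConnectedComponent := Fintype.ofFinite _
  have hcard : Fintype.card H.ConnectedComponent = k := by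
    rw [← Nat.card_eq_fintype_card]; exact hk
  let e : H.ConnectedComponent ≃ Fin k := Fintype.equivFinOfCardEq hcard
  let c : V → Fin k := fun v => e (H.connectedComponentMk v)
  have hproper : ∀ u v : V, G.Adj u v → c u ≠ c v := by
    intro u v hadj heq
    have hmk : H.connectedComponentMk u = H.connectedComponentMk v := e.injective heq
    rcases (comp_eq u v).mp hmk with rfl | h1
    · exact G.irrefl hadj
    · rw [hedge u v hadj] at h1; norm_num at h1
  have hsurj : Function.Surjective c := by
    intro i
    obtain ⟨v, hv⟩ := (e.symm i).exists_rep
    have hv' : H.connectedComponentMk v = e.symm i := hv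
    exact ⟨v, by simp only [c, hv', Equiv.apply_symm_apply]⟩
  refine ⟨⟨c, hproper, hsurj⟩, ?_⟩
  -- chromatic number bound
  have hcol : G.Colorable k := ⟨SimpleGraph.Coloring.mk c (fun h => hproper _ _ h)⟩
  have hchrom : G.chromaticNumber ≤ (k : ℕ∞) := hcol.chromaticNumber_le
  have hχ : G.chromaticNumber.toNat ≤ k := by
    have := ENat.toNat_le_toNat hchrom (by simp)
    simpa using this
  -- the sizes of components
  set m : V → ℕ := fun v =>
    (univ.filter fun u => H.connectedComponentMk u = H.connectedComponentMk v).card with hm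
  have hm_pos : ∀ v, 0 < m v := fun v => Finset.card_pos.mpr ⟨v, Finset.mem_filter.mpr ⟨Finset.mem_univ v, rfl⟩⟩
  have key : ∀ v : V, (1 + ∑ u ∈ univ.filter (· ≠ v), x u v) = (m v : ℝ) := by
    intro v
    have hx : ∀ u ∈ univ.erase v, x u v =
        (if H.connectedComponentMk u = H.connectedComponentMk v then (1:ℝ) else 0) := by
      intro u hu
      have hne : u ≠ v := (Finset.mem_erase.mp hu).1
      rcases hbin u v hne with h | h
      · rw [h, if_neg]
        intro hmk
        rcases (comp_eq u v).mp hmk with rfl | h1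
        · exact hne rfl
        · rw [h] at h1; norm_num at h1
      · rw [h, if_pos ((comp_eq u v).mpr (Or.inr h))]
    rw [Finset.filter_ne', Finset.sum_congr rfl hx]
    have h2 := Finset.sum_erase_add univ
      (fun u => if H.connectedComponentMk u = H.connectedComponentMk v then (1:ℝ) else 0)
      (Finset.mem_univ v)
    simp only [eq_self_iff_true, if_true] at h2
    have h3 : ∑ u : V,
        (if H.connectedComponentMk u = H.connectedComponentMk v then (1:ℝ) else 0)
        = (m v : ℝ) := by
      rw [Finset.sum_boole, hm]
    linarith
  have hsum2 : ∑ v : V, (1:ℝ) / (m v) = k := by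
    have hfib := Finset.sum_fiberwise univ (fun v => H.connectedComponentMk v)
      (fun v => (1:ℝ) / (m v))
    rw [← hfib]
    have hinner : ∀ C : H.ConnectedComponent,
        ∑ v ∈ univ.filter (fun v => H.connectedComponentMk v = C), (1:ℝ) / (m v)
        = if (univ.filter (fun v => H.connectedComponentMk v = C)).Nonempty then 1 else 0 := by
      intro C
      by_cases hne : (univ.filter (fun v => H.connectedComponentMk v = C)).Nonempty
      · rw [if_pos hne]
        have hmv : ∀ v ∈ univ.filter (fun v => H.connectedComponentMk v = C),
            (1:ℝ) / (m v) =
            1 / ((univ.filter (fun v => H.connectedComponentMk v = C)).card : ℝ) := by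
          intro v hv
          have hvC : H.connectedComponentMk v = C := (Finset.mem_filter.mp hv).2
          have hset : (univ.filter fun u =>
              H.connectedComponentMk u = H.connectedComponentMk v)
              = univ.filter (fun u => H.connectedComponentMk u = C) := by
            apply Finset.filter_congr; intro u _; rw [hvC]
          simp only [hm, hset]
        rw [Finset.sum_congr rfl hmv, Finset.sum_const, nsmul_eq_mul]
        have hcpos : (0:ℝ) < (univ.filter (fun v => H.connectedComponentMk v = C)).card := by
          exact_mod_cast Finset.card_pos.mpr hne
        field_simp
      · rw [if_neg hne, Finset.not_nonempty_iff_eq_empty.mp hne, Finset.sum_empty]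
    rw [Finset.sum_congr rfl (fun C _ => hinner C)]
    have hall : ∀ C : H.ConnectedComponent,
        (univ.filter (fun v => H.connectedComponentMk v = C)).Nonempty := by
      intro C
      obtain ⟨v, hv⟩ := C.exists_rep
      have hv' : H.connectedComponentMk v = C := hv
      exact ⟨v, Finset.mem_filter.mpr ⟨Finset.mem_univ v, hv'⟩⟩
    rw [Finset.sum_congr rfl (fun C _ => if_pos (hall C)), Finset.sum_const, nsmul_eq_mul,
      mul_one, Finset.card_univ, hcard]
  calc (G.chromaticNumber.toNat : ℝ) ≤ (k : ℝ) := by exact_mod_cast hχ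
    _ = ∑ v : V, (1:ℝ) / (m v) := hsum2.symm
    _ = ∑ v : V, 1 / (1 + ∑ u ∈ univ.filter (· ≠ v), x u v) := by
        exact Finset.sum_congr rfl fun v _ => by rw [key v]
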